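/- (Joint concentration lemma.) Let ρ ∈ L^1_+(R^3) and σ ∈ L^1_+(R^2) with 0 < ∫ρ ≤ M and 0 < ∫σ ≤ M, and suppose ∫∫_{|x-(ỹ,0)|<r_0} ρ(x)σ(ỹ) dx dỹ > δ_0 for some δ_0, r_0 > 0. Then with ε_0 := δ_0^2/(8M^3) and R_0 := 3r_0 there exists ã ∈ R^2 such that ∫_{|x-(ã,0)|<R_0} ρ(x) dx > ε_0 and ∫_{|ỹ-ã|<R_0} σ(ỹ) dỹ > ε_0. -/

import Mathlib

open MeasureTheory
noncomputable section

abbrev E3 := EuclideanSpace ℝ (Fin 3)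
abbrev E2 := EuclideanSpace ℝ (Fin 2)

/-- The embedding `ỹ ↦ (ỹ, 0)` of the plane into `ℝ³`. -/
def emb (y : E2) : E3 := (WithLp.equiv 2 (Fin 3 → ℝ)).symm ![y 0, y 1, 0]

lemma emb_cont : Continuous emb := by
  unfold emb
  refine Continuous.comp (PiLp.continuous_toLp (p := 2) (β := fun _ : Fin 3 => ℝ)) ?_
  refine continuous_pi ?_
  intro i
  fin_cases i <;> simp <;> fun_prop

lemma emb_dist (y y' : E2) : ‖emb y - emb y'‖ = ‖y - y'‖ := by
  unfold emb
  rw [EuclideanSpace.norm_eq, EuclideanSpace.norm_eq]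
  congr 1
  rw [Fin.sum_univ_three, Fin.sum_univ_two]
  simp [WithLp.equiv_symm_apply, PiLp.toLp_apply]

/-- Cauchy-Schwarz via the discriminant trick. -/
lemma cs {α : Type*} [MeasurableSpace α] {μ : Measure α} (ρ S : α → ℝ)
    (hρ0 : ∀ x, 0 ≤ ρ x)
    (h1 : Integrable ρ μ) (h2 : Integrable (fun x => ρ x * S x) μ)
    (h3 : Integrable (fun x => ρ x * S x ^ 2) μ)
    (hpos : 0 < ∫ x, ρ x ∂μ) :
    (∫ x, ρ x * S x ∂μ) ^ 2 ≤ (∫ x, ρ x ∂μ) * (∫ x, ρ x * S x ^ 2 ∂μ) := by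
  set I1 := ∫ x, ρ x ∂μ with hI1
  set I2 := ∫ x, ρ x * S x ∂μ with hI2
  set I3 := ∫ x, ρ x * S x ^ 2 ∂μ with hI3
  set t := I2 / I1 with ht
  have key : 0 ≤ ∫ x, ρ x * (S x - t) ^ 2 ∂μ :=
    integral_nonneg fun x => mul_nonneg (hρ0 x) (sq_nonneg _)
  have heq : (fun x => ρ x * (S x - t) ^ 2)
      = fun x => (ρ x * S x ^ 2 - (2 * t) * (ρ x * S x)) + (t ^ 2) * ρ x := by
    funext x; ring
  have ha : Integrable (fun x => ρ x * S x ^ 2 - 2 * t * (ρ x * S x)) μ :=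
    h3.sub (h2.const_mul _)
  have hb : Integrable (fun x => t ^ 2 * ρ x) μ := h1.const_mul _
  rw [heq, integral_add ha hb, integral_sub h3 (h2.const_mul _),
    integral_const_mul, integral_const_mul] at key
  have : 0 ≤ I3 - 2 * (I2 / I1) * I2 + (I2 / I1) ^ 2 * I1 := by
    rw [ht] at key; linarith
  have h4 : (I2 / I1) * I1 = I2 := div_mul_cancel₀ _ (ne_of_gt hpos)
  nlinarith [this, hpos, sq_nonneg (I2 / I1)]

set_option maxHeartbeats 1000000 in
/-- joint concentration lemma: if the masses of `ρ` on `ℝ³` and `σ` on `ℝ²`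
are positive and bounded by `M` and the joint mass near the plane within distance `r₀`
exceeds `δ₀`, then with `ε₀ = δ₀²/(8M³)` and `R₀ = 3r₀` there is a common center
`ã ∈ ℝ²` carrying mass `> ε₀` of both densities. -/
theorem statement9 (ρ : E3 → ℝ) (σ : E2 → ℝ) (M δ₀ r₀ : ℝ)
    (hρm : Measurable ρ) (hσm : Measurable σ)
    (hρ0 : ∀ x, 0 ≤ ρ x) (hσ0 : ∀ y, 0 ≤ σ y)
    (hρi : Integrable ρ) (hσi : Integrable σ)
    (hρpos : 0 < ∫ x, ρ x) (hρM : (∫ x, ρ x) ≤ M)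
    (hσpos : 0 < ∫ y, σ y) (hσM : (∫ y, σ y) ≤ M)
    (hδ : 0 < δ₀) (hr : 0 < r₀)
    (hconc : δ₀ < ∫ x, ∫ y, (if ‖x - emb y‖ < r₀ then ρ x * σ y else 0)) :
    ∃ a : E2,
      δ₀^2 / (8 * M^3) < ∫ x in Metric.ball (emb a) (3 * r₀), ρ x ∧
      δ₀^2 / (8 * M^3) < ∫ y in Metric.ball a (3 * r₀), σ y := by
  classical
  have hM : 0 < M := lt_of_lt_of_le hρpos hρM
  set ε : ℝ := δ₀^2 / (8 * M^3) with hε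
  have hεpos : 0 < ε := by positivity
  set S : E3 → ℝ := fun x => ∫ y, if ‖x - emb y‖ < r₀ then σ y else 0 with hSdef
  set f : E2 → ℝ := fun y => ∫ x, if ‖x - emb y‖ < r₀ then ρ x else 0 with hfdef
  set g : E2 → ℝ := fun y => ∫ y', if ‖y - y'‖ < 2*r₀ then σ y' else 0 with hgdef
  -- measurability of the relevant sets
  have hD : MeasurableSet {p : E3 × E2 | ‖p.1 - emb p.2‖ < r₀} := by
    have : Continuous fun p : E3 × E2 => ‖p.1 - emb p.2‖ :=
      (continuous_fst.sub (emb_cont.comp continuous_snd)).norm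
    exact (isOpen_lt this continuous_const).measurableSet
  have hD2 : MeasurableSet {p : E2 × E2 | ‖p.1 - p.2‖ < 2*r₀} := by
    have : Continuous fun p : E2 × E2 => ‖p.1 - p.2‖ :=
      (continuous_fst.sub continuous_snd).norm
    exact (isOpen_lt this continuous_const).measurableSet
  have hUx : ∀ x : E3, MeasurableSet {y : E2 | ‖x - emb y‖ < r₀} := by
    intro x
    have : Continuous fun y : E2 => ‖x - emb y‖ := (continuous_const.sub emb_cont).norm
    exact (isOpen_lt this continuous_const).measurableSet
  have hUy : ∀ y : E2, MeasurableSet {x : E3 | ‖x - emb y‖ < r₀} := by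
    intro y
    have : Continuous fun x : E3 => ‖x - emb y‖ := (continuous_id.sub continuous_const).norm
    exact (isOpen_lt this continuous_const).measurableSet
  have hVy : ∀ y : E2, MeasurableSet {y' : E2 | ‖y - y'‖ < 2*r₀} := by
    intro y
    have : Continuous fun y' : E2 => ‖y - y'‖ := (continuous_const.sub continuous_id).norm
    exact (isOpen_lt this continuous_const).measurableSet
  -- integrability of the cut-off integrands
  have hIσx : ∀ x : E3, Integrable (fun y => if ‖x - emb y‖ < r₀ then σ y else 0) := by
    intro x
    refine hσi.mono' ((hσm.ite (hUx x) measurable_const).aestronglyMeasurable) ?_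
    filter_upwards with y
    split
    · rw [Real.norm_eq_abs, abs_of_nonneg (hσ0 y)]
    · simpa using hσ0 y
  have hIρy : ∀ y : E2, Integrable (fun x => if ‖x - emb y‖ < r₀ then ρ x else 0) := by
    intro y
    refine hρi.mono' ((hρm.ite (hUy y) measurable_const).aestronglyMeasurable) ?_
    filter_upwards with x
    split
    · rw [Real.norm_eq_abs, abs_of_nonneg (hρ0 x)]
    · simpa using hρ0 x
  have hIσy : ∀ y : E2, Integrable (fun y' => if ‖y - y'‖ < 2*r₀ then σ y' else 0) := by
    intro y
    refine hσi.mono' ((hσm.ite (hVy y) measurable_const).aestronglyMeasurable) ?_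
    filter_upwards with y'
    split
    · rw [Real.norm_eq_abs, abs_of_nonneg (hσ0 y')]
    · simpa using hσ0 y'
  -- pointwise bounds
  have hS0 : ∀ x, 0 ≤ S x := fun x =>
    integral_nonneg fun y => by dsimp only; split; exacts [hσ0 y, le_refl 0]
  have hSM : ∀ x, S x ≤ M := by
    intro x
    refine le_trans (integral_mono (hIσx x) hσi ?_) hσM
    intro y; dsimp only; split; exacts [le_refl _, hσ0 y]
  have hf0 : ∀ y, 0 ≤ f y := fun y =>
    integral_nonneg fun x => by dsimp only; split; exacts [hρ0 x, le_refl 0]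
  have hfM : ∀ y, f y ≤ M := by
    intro y
    refine le_trans (integral_mono (hIρy y) hρi ?_) hρM
    intro x; dsimp only; split; exacts [le_refl _, hρ0 x]
  have hg0 : ∀ y, 0 ≤ g y := fun y =>
    integral_nonneg fun y' => by dsimp only; split; exacts [hσ0 y', le_refl 0]
  have hgM : ∀ y, g y ≤ M := by
    intro y
    refine le_trans (integral_mono (hIσy y) hσi ?_) hσM
    intro y'; dsimp only; split; exacts [le_refl _, hσ0 y']
  -- measurability of S, g
  have hSm : StronglyMeasurable S := by
    exact (((hσm.comp measurable_snd).ite hD measurable_const).stronglyMeasurable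
      : StronglyMeasurable fun p : E3 × E2 =>
        if ‖p.1 - emb p.2‖ < r₀ then σ p.2 else 0).integral_prod_right'
  have hgm : StronglyMeasurable g := by
    exact (((hσm.comp measurable_snd).ite hD2 measurable_const).stronglyMeasurable
      : StronglyMeasurable fun p : E2 × E2 =>
        if ‖p.1 - p.2‖ < 2*r₀ then σ p.2 else 0).integral_prod_right'
  -- Step 1 : δ₀ < ∫ ρ S
  have hrw1 : (fun x => ∫ y, if ‖x - emb y‖ < r₀ then ρ x * σ y else 0)
      = fun x => ρ x * S x := by
    funext x
    rw [hSdef]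
    dsimp only
    rw [← integral_const_mul]
    congr 1; funext y; split <;> ring
  have step1 : δ₀ < ∫ x, ρ x * S x := by rw [← hrw1]; exact hconc
  -- integrability of ρ·S and ρ·S²
  have hρS : Integrable (fun x => ρ x * S x) := by
    refine (hρi.const_mul M).mono'
      ((hρm.mul hSm.measurable).aestronglyMeasurable) ?_
    filter_upwards with x
    rw [Real.norm_eq_abs, abs_of_nonneg (mul_nonneg (hρ0 x) (hS0 x))]
    calc ρ x * S x ≤ ρ x * M := mul_le_mul_of_nonneg_left (hSM x) (hρ0 x)
      _ = M * ρ x := mul_comm _ _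
  have hρS2 : Integrable (fun x => ρ x * S x ^ 2) := by
    refine (hρi.const_mul (M*M)).mono'
      ((hρm.mul (hSm.measurable.pow_const 2)).aestronglyMeasurable) ?_
    filter_upwards with x
    rw [Real.norm_eq_abs, abs_of_nonneg (mul_nonneg (hρ0 x) (sq_nonneg _))]
    have h1 : S x ^ 2 ≤ M * M := by nlinarith [hS0 x, hSM x]
    calc ρ x * S x ^ 2 ≤ ρ x * (M*M) := mul_le_mul_of_nonneg_left h1 (hρ0 x)
      _ = M * M * ρ x := mul_comm _ _
  -- Cauchy-Schwarz
  have hCS := cs ρ S hρ0 hρi hρS hρS2 hρpos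
  have hI3nn : 0 ≤ ∫ x, ρ x * S x ^ 2 :=
    integral_nonneg fun x => mul_nonneg (hρ0 x) (sq_nonneg _)
  have step2 : δ₀^2 / M < ∫ x, ρ x * S x ^ 2 := by
    rw [div_lt_iff₀ hM]
    nlinarith [step1, hδ, hρM, hρpos, hI3nn]
  -- integrability of y ↦ ite (σ y * g y)
  have hIσg : ∀ x : E3, Integrable (fun y => if ‖x - emb y‖ < r₀ then σ y * g y else 0) := by
    intro x
    refine (hσi.const_mul M).mono'
      (((hσm.mul hgm.measurable).ite (hUx x) measurable_const).aestronglyMeasurable) ?_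
    filter_upwards with y
    split
    · rw [Real.norm_eq_abs, abs_of_nonneg (mul_nonneg (hσ0 y) (hg0 y))]
      nlinarith [hσ0 y, hg0 y, hgM y]
    · simpa using mul_nonneg hM.le (hσ0 y)
  -- if x is r₀-close to the plane point over y then S x ≤ g y
  have hgSx : ∀ (x : E3) (y : E2), ‖x - emb y‖ < r₀ → S x ≤ g y := by
    intro x y hc
    rw [hSdef, hgdef]
    dsimp only
    refine integral_mono (hIσx x) (hIσy y) ?_
    intro y'
    dsimp only
    by_cases h1 : ‖x - emb y'‖ < r₀
    · have h2 : ‖y - y'‖ < 2 * r₀ := by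
        rw [← emb_dist]
        calc ‖emb y - emb y'‖ ≤ ‖emb y - x‖ + ‖x - emb y'‖ := norm_sub_le_norm_sub_add_norm_sub _ _ _
          _ < r₀ + r₀ := by rw [norm_sub_rev]; exact add_lt_add hc h1
          _ = 2 * r₀ := by ring
      rw [if_pos h1, if_pos h2]
    · rw [if_neg h1]
      split
      exacts [hσ0 _, le_refl 0]
  -- pointwise : S x ^ 2 ≤ ∫ y, ite (σ y * g y)
  have hpoint : ∀ x : E3, S x ^ 2 ≤ ∫ y, (if ‖x - emb y‖ < r₀ then σ y * g y else 0) := by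
    intro x
    have e2 : (fun y => if ‖x - emb y‖ < r₀ then σ y * S x else 0)
        = fun y => (if ‖x - emb y‖ < r₀ then σ y else 0) * S x := by
      funext y; split <;> ring
    have e : (∫ y, if ‖x - emb y‖ < r₀ then σ y * S x else 0) = S x ^ 2 := by
      rw [e2, integral_mul_const]
      show S x * S x = S x ^ 2
      ring
    rw [← e]
    refine integral_mono (e2 ▸ ((hIσx x).mul_const (S x))) (hIσg x) ?_
    intro y
    dsimp only
    by_cases hc : ‖x - emb y‖ < r₀
    · rw [if_pos hc, if_pos hc]
      exact mul_le_mul_of_nonneg_left (hgSx x y hc) (hσ0 y)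
    · rw [if_neg hc, if_neg hc]
  -- Fubini
  have hH : Integrable (fun p : E3 × E2 =>
      if ‖p.1 - emb p.2‖ < r₀ then ρ p.1 * (σ p.2 * g p.2) else 0)
      ((volume : Measure E3).prod volume) := by
    refine (hρi.mul_prod (hσi.const_mul M)).mono' ?_ ?_
    · exact (((hρm.comp measurable_fst).mul
        ((hσm.comp measurable_snd).mul (hgm.measurable.comp measurable_snd))).ite hD
        measurable_const).aestronglyMeasurable
    · filter_upwards with p
      rcases p with ⟨x, y⟩
      dsimp only
      split
      · rw [Real.norm_eq_abs, abs_of_nonneg (mul_nonneg (hρ0 x) (mul_nonneg (hσ0 y) (hg0 y)))]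
        have h1 : σ y * g y ≤ M * σ y := by nlinarith [hσ0 y, hg0 y, hgM y]
        exact mul_le_mul_of_nonneg_left h1 (hρ0 x)
      · simpa using mul_nonneg (hρ0 x) (mul_nonneg hM.le (hσ0 y))
  have hswap : (∫ x, ∫ y, if ‖x - emb y‖ < r₀ then ρ x * (σ y * g y) else 0)
      = ∫ y, ∫ x, if ‖x - emb y‖ < r₀ then ρ x * (σ y * g y) else 0 := by
    apply integral_integral_swap
      (f := fun (x : E3) (y : E2) => if ‖x - emb y‖ < r₀ then ρ x * (σ y * g y) else 0)
    exact hH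
  have hleft : ∀ x : E3, (∫ y, if ‖x - emb y‖ < r₀ then ρ x * (σ y * g y) else 0)
      = ρ x * ∫ y, (if ‖x - emb y‖ < r₀ then σ y * g y else 0) := by
    intro x
    rw [← integral_const_mul]
    congr 1; funext y; split <;> ring
  have hright : ∀ y : E2, (∫ x, if ‖x - emb y‖ < r₀ then ρ x * (σ y * g y) else 0)
      = f y * (σ y * g y) := by
    intro y
    have e2 : (fun x => if ‖x - emb y‖ < r₀ then ρ x * (σ y * g y) else 0)
        = fun x => (if ‖x - emb y‖ < r₀ then ρ x else 0) * (σ y * g y) := by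
      funext x; split <;> ring
    rw [e2, integral_mul_const]
  -- chain : δ₀²/M < ∫ f σ g
  have hTm : StronglyMeasurable (fun x : E3 => ∫ y, (if ‖x - emb y‖ < r₀ then σ y * g y else 0)) :=
    ((((hσm.comp measurable_snd).mul (hgm.measurable.comp measurable_snd)).ite hD
      measurable_const).stronglyMeasurable : StronglyMeasurable fun p : E3 × E2 =>
        if ‖p.1 - emb p.2‖ < r₀ then σ p.2 * g p.2 else 0).integral_prod_right'
  have hT0 : ∀ x : E3, 0 ≤ ∫ y, (if ‖x - emb y‖ < r₀ then σ y * g y else 0) := fun x =>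
    integral_nonneg fun y => by
      dsimp only; split; exacts [mul_nonneg (hσ0 _) (hg0 _), le_refl 0]
  have hTM : ∀ x : E3, (∫ y, (if ‖x - emb y‖ < r₀ then σ y * g y else 0)) ≤ M * M := by
    intro x
    refine le_trans (integral_mono (hIσg x) (hσi.const_mul M) ?_) ?_
    · intro y
      dsimp only
      split
      · nlinarith [hσ0 y, hg0 y, hgM y]
      · exact mul_nonneg hM.le (hσ0 y)
    · rw [integral_const_mul]
      exact mul_le_mul_of_nonneg_left hσM hM.le
  have m1 : (∫ x, ρ x * S x ^ 2)
      ≤ ∫ x, ρ x * ∫ y, (if ‖x - emb y‖ < r₀ then σ y * g y else 0) := by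
    refine integral_mono hρS2 ?_ ?_
    · refine (hρi.const_mul (M*M)).mono' ((hρm.mul hTm.measurable).aestronglyMeasurable) ?_
      filter_upwards with x
      rw [Real.norm_eq_abs, abs_of_nonneg (mul_nonneg (hρ0 x) (hT0 x))]
      calc ρ x * ∫ y, (if ‖x - emb y‖ < r₀ then σ y * g y else 0)
          ≤ ρ x * (M * M) := mul_le_mul_of_nonneg_left (hTM x) (hρ0 x)
        _ = M * M * ρ x := mul_comm _ _
    · intro x
      exact mul_le_mul_of_nonneg_left (hpoint x) (hρ0 x)
  have step3 : δ₀^2 / M < ∫ y, f y * (σ y * g y) := by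
    have e1 : (∫ x, ρ x * ∫ y, (if ‖x - emb y‖ < r₀ then σ y * g y else 0))
        = ∫ x, ∫ y, if ‖x - emb y‖ < r₀ then ρ x * (σ y * g y) else 0 :=
      integral_congr_ae (Filter.Eventually.of_forall fun x => (hleft x).symm)
    have e3 : (∫ y, ∫ x, if ‖x - emb y‖ < r₀ then ρ x * (σ y * g y) else 0)
        = ∫ y, f y * (σ y * g y) :=
      integral_congr_ae (Filter.Eventually.of_forall fun y => hright y)
    calc δ₀^2 / M < ∫ x, ρ x * S x ^ 2 := step2
      _ ≤ _ := m1
      _ = ∫ y, f y * (σ y * g y) := by rw [e1, hswap, e3]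
  -- final contradiction
  by_contra hcon
  push_neg at hcon
  have hfg : ∀ y : E2, f y ≤ ε ∨ g y ≤ ε := by
    intro y
    have ef : f y = ∫ x in Metric.ball (emb y) r₀, ρ x := by
      rw [hfdef]
      dsimp only
      rw [← integral_indicator measurableSet_ball]
      have hfun : (fun x : E3 => if ‖x - emb y‖ < r₀ then ρ x else 0)
          = (Metric.ball (emb y) r₀).indicator ρ := by
        funext x
        rw [Set.indicator_apply]
        by_cases hx : x ∈ Metric.ball (emb y) r₀
        · rw [if_pos hx, if_pos (by simpa [Metric.mem_ball, dist_eq_norm] using hx)]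
        · rw [if_neg hx, if_neg (by simpa [Metric.mem_ball, dist_eq_norm] using hx)]
      rw [hfun]
    have eg : g y = ∫ y' in Metric.ball y (2*r₀), σ y' := by
      rw [hgdef]
      dsimp only
      rw [← integral_indicator measurableSet_ball]
      have hfun : (fun y' : E2 => if ‖y - y'‖ < 2*r₀ then σ y' else 0)
          = (Metric.ball y (2*r₀)).indicator σ := by
        funext y'
        have hmem : (y' ∈ Metric.ball y (2*r₀)) ↔ (‖y - y'‖ < 2*r₀) := by
          rw [Metric.mem_ball, dist_eq_norm, norm_sub_rev]
        rw [Set.indicator_apply]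
        by_cases hy : y' ∈ Metric.ball y (2*r₀)
        · rw [if_pos hy, if_pos (hmem.1 hy)]
        · rw [if_neg hy, if_neg (fun hc => hy (hmem.2 hc))]
      rw [hfun]
    have hf3 : f y ≤ ∫ x in Metric.ball (emb y) (3*r₀), ρ x := by
      rw [ef]
      exact setIntegral_mono_set hρi.integrableOn
        (Filter.Eventually.of_forall fun x => hρ0 x)
        ((Metric.ball_subset_ball (by linarith)).eventuallyLE)
    have hg3 : g y ≤ ∫ y' in Metric.ball y (3*r₀), σ y' := by
      rw [eg]
      exact setIntegral_mono_set hσi.integrableOn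
        (Filter.Eventually.of_forall fun y' => hσ0 y')
        ((Metric.ball_subset_ball (by linarith)).eventuallyLE)
    by_cases hb : ε < ∫ x in Metric.ball (emb y) (3*r₀), ρ x
    · exact Or.inr (le_trans hg3 (hcon y hb))
    · exact Or.inl (le_trans hf3 (not_lt.1 hb))
  have up : (∫ y, f y * (σ y * g y)) ≤ ∫ y, (ε * M) * σ y := by
    refine integral_mono_of_nonneg
      (Filter.Eventually.of_forall fun y => mul_nonneg (hf0 y) (mul_nonneg (hσ0 y) (hg0 y)))
      (hσi.const_mul _) (Filter.Eventually.of_forall fun y => ?_)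
    show f y * (σ y * g y) ≤ ε * M * σ y
    rcases hfg y with h | h
    · nlinarith [hσ0 y, hg0 y, hgM y, hf0 y, hεpos,
        mul_nonneg (mul_nonneg (sub_nonneg.2 h) (hσ0 y)) (hg0 y),
        mul_nonneg (mul_nonneg hεpos.le (hσ0 y)) (sub_nonneg.2 (hgM y))]
    · nlinarith [hσ0 y, hf0 y, hfM y, hg0 y, hεpos,
        mul_nonneg (mul_nonneg (sub_nonneg.2 h) (hσ0 y)) (hf0 y),
        mul_nonneg (mul_nonneg hεpos.le (hσ0 y)) (sub_nonneg.2 (hfM y))]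
  have up2 : (∫ y, (ε*M)*σ y) = ε * M * ∫ y, σ y := integral_const_mul _ _
  have hlt : δ₀^2 / M < ε * M * M := by
    refine lt_of_lt_of_le step3 (up.trans ?_)
    rw [up2]
    exact mul_le_mul_of_nonneg_left hσM (by positivity)
  have hval : ε * M * M = δ₀^2 / (8*M) := by
    rw [hε]; field_simp
  have h8 : δ₀^2/(8*M) < δ₀^2/M :=
    div_lt_div_of_pos_left (by positivity) hM (by linarith)
  rw [hval] at hlt
  linarith
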